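/- Let $A, B$ be positive semidefinite operators that are rank one, written $A = p_1 |\psi_1\rangle\langle\psi_1|$ and $B = p_2 |\psi_2\rangle\langle\psi_2|$ with $p_1, p_2 > 0$ and unit vectors $\psi_1, \psi_2$. Then $\frac{p_1 p_2}{p_1+p_2} |\langle\psi_1,\psi_2\rangle|^2 \le \frac{1}{2}\operatorname{Tr}(A+B) - \frac{1}{2}\|A-B\|_1 \le \frac{2 p_1 p_2}{p_1+p_2} |\langle\psi_1,\psi_2\rangle|^2$. -/

import Mathlib

open Matrix
open scoped ComplexOrder

noncomputable def matAbs {m : ℕ} (A : Matrix (Fin m) (Fin m) ℂ) : Matrix (Fin m) (Fin m) ℂ :=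
  (Matrix.posSemidef_conjTranspose_mul_self A).1.eigenvectorUnitary.1 *
    diagonal ((↑) ∘ Real.sqrt ∘ (Matrix.posSemidef_conjTranspose_mul_self A).1.eigenvalues) *
    (star (Matrix.posSemidef_conjTranspose_mul_self A).1.eigenvectorUnitary : Matrix (Fin m) (Fin m) ℂ)

noncomputable def traceNorm {m : ℕ} (A : Matrix (Fin m) (Fin m) ℂ) : ℝ :=
  ((matAbs A).trace).re

open Classical in
noncomputable def psdSqrt {m : ℕ} (A : Matrix (Fin m) (Fin m) ℂ) : Matrix (Fin m) (Fin m) ℂ :=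
  if h : A.PosSemidef then h.1.eigenvectorUnitary.1 * diagonal ((↑) ∘ Real.sqrt ∘ h.1.eigenvalues) *
    (star h.1.eigenvectorUnitary : Matrix (Fin m) (Fin m) ℂ) else 0

noncomputable def fid {m : ℕ} (A B : Matrix (Fin m) (Fin m) ℂ) : ℝ :=
  traceNorm (psdSqrt A * psdSqrt B)

noncomputable def matPosPart {m : ℕ} (A : Matrix (Fin m) (Fin m) ℂ) : Matrix (Fin m) (Fin m) ℂ :=
  (2⁻¹ : ℂ) • (matAbs A + A)

noncomputable def matNegPart {m : ℕ} (A : Matrix (Fin m) (Fin m) ℂ) : Matrix (Fin m) (Fin m) ℂ :=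
  (2⁻¹ : ℂ) • (matAbs A - A)


lemma psd_smul {d : ℕ} {A : Matrix (Fin d) (Fin d) ℂ} (hA : A.PosSemidef) {r : ℝ}
    (hr : 0 ≤ r) : ((r : ℂ) • A).PosSemidef := by
  exact hA.smul (a := (r : ℂ)) (by exact_mod_cast hr)

open scoped MatrixOrder in
lemma matAbs_eq_of_sq {m : ℕ} (A N : Matrix (Fin m) (Fin m) ℂ) (hN : N.PosSemidef)
    (h : N ^ 2 = Aᴴ * A) : matAbs A = N := by
  have hA := Matrix.posSemidef_conjTranspose_mul_self A
  have h1 : matAbs A = hA.1.cfc Real.sqrt := by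
    rw [Matrix.IsHermitian.cfc, Unitary.conjStarAlgAut_apply]; rfl
  rw [h1, ← hA.1.cfc_eq, ← cfcₙ_eq_cfc (hf0 := by simp), ← CFC.sqrt_eq_real_sqrt _ hA.nonneg]
  exact CFC.sqrt_unique (by rw [← sq, h]) hN.nonneg

lemma psd_of_sq {d : ℕ} {P : Matrix (Fin d) (Fin d) ℂ} (hP : Pᴴ = P) {k : ℝ}
    (hk : 0 ≤ k) (h2 : P * P = (k : ℂ) • P) : P.PosSemidef := by
  rcases eq_or_lt_of_le hk with hk0 | hk0
  · have hPP : Pᴴ * P = 0 := by rw [hP, h2, ← hk0]; simp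
    rw [Matrix.conjTranspose_mul_self_eq_zero.mp hPP]
    exact Matrix.PosSemidef.zero
  · have hR : ((((Real.sqrt k)⁻¹ : ℝ) : ℂ) • P)ᴴ * ((((Real.sqrt k)⁻¹ : ℝ) : ℂ) • P) = P := by
      rw [conjTranspose_smul, hP, smul_mul_assoc, mul_smul_comm, h2]
      rw [smul_smul, smul_smul]
      have hs : Real.sqrt k ≠ 0 := by positivity
      rw [show (star ((((Real.sqrt k)⁻¹ : ℝ) : ℂ)) * (((Real.sqrt k)⁻¹ : ℝ) : ℂ) * (k : ℂ)) = (1 : ℂ) by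
        rw [Complex.star_def, Complex.conj_ofReal]
        norm_cast
        field_simp
        exact (Real.sq_sqrt hk).symm]
      rw [one_smul]
    rw [← hR]
    exact Matrix.posSemidef_conjTranspose_mul_self _

lemma vmv_mul {d : ℕ} (a b c e : Fin d → ℂ) :
    vecMulVec a b * vecMulVec c e = (b ⬝ᵥ c) • vecMulVec a e := by
  ext i j
  simp only [mul_apply, vecMulVec_apply, Matrix.smul_apply, dotProduct, smul_eq_mul, Finset.sum_mul]
  exact Finset.sum_congr rfl fun k _ => by ring

lemma trace_vmv {d : ℕ} (a b : Fin d → ℂ) : (vecMulVec a b).trace = a ⬝ᵥ b := by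
  simp [trace, vecMulVec_apply, dotProduct, Matrix.diag]

lemma euclid_norm_sq {d : ℕ} (ψ : Fin d → ℂ) :
    ‖(WithLp.equiv 2 (Fin d → ℂ)).symm ψ‖ = Real.sqrt (∑ i, Complex.normSq (ψ i)) := by
  rw [EuclideanSpace.norm_eq]
  congr 1
  exact Finset.sum_congr rfl fun i _ => by
    rw [← Complex.sq_norm]; rfl

lemma inner_eq_dot {d : ℕ} (ψ₁ ψ₂ : Fin d → ℂ) :
    (inner ℂ ((WithLp.equiv 2 (Fin d → ℂ)).symm ψ₁)
      ((WithLp.equiv 2 (Fin d → ℂ)).symm ψ₂) : ℂ) = star ψ₁ ⬝ᵥ ψ₂ := by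
  simp [PiLp.inner_apply, dotProduct, RCLike.inner_apply, mul_comm]

lemma cs_le_one {d : ℕ} (ψ₁ ψ₂ : Fin d → ℂ)
    (hψ₁ : ∑ i, Complex.normSq (ψ₁ i) = 1) (hψ₂ : ∑ i, Complex.normSq (ψ₂ i) = 1) :
    Complex.normSq (star ψ₁ ⬝ᵥ ψ₂) ≤ 1 := by
  have h := norm_inner_le_norm (𝕜 := ℂ) ((WithLp.equiv 2 (Fin d → ℂ)).symm ψ₁)
    ((WithLp.equiv 2 (Fin d → ℂ)).symm ψ₂)
  rw [euclid_norm_sq, euclid_norm_sq, hψ₁, hψ₂, Real.sqrt_one, mul_one, inner_eq_dot] at h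
  calc Complex.normSq (star ψ₁ ⬝ᵥ ψ₂) = ‖star ψ₁ ⬝ᵥ ψ₂‖^2 := by
        rw [← Complex.sq_norm]
    _ ≤ 1 := by nlinarith [norm_nonneg (star ψ₁ ⬝ᵥ ψ₂)]


set_option maxHeartbeats 1000000 in
lemma key {d : ℕ} (p₁ p₂ : ℝ) (hp₁ : 0 < p₁) (hp₂ : 0 < p₂) (ψ₁ ψ₂ : Fin d → ℂ)
    (hψ₁ : ∑ i, Complex.normSq (ψ₁ i) = 1) (hψ₂ : ∑ i, Complex.normSq (ψ₂ i) = 1) :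
    traceNorm ((p₁ : ℂ) • vecMulVec ψ₁ (star ψ₁) - (p₂ : ℂ) • vecMulVec ψ₂ (star ψ₂)) =
      Real.sqrt ((p₁ + p₂)^2 - 4*p₁*p₂*Complex.normSq (star ψ₁ ⬝ᵥ ψ₂)) := by
  set t : ℂ := star ψ₁ ⬝ᵥ ψ₂ with ht
  set c : ℝ := Complex.normSq t with hc
  set X := vecMulVec ψ₁ (star ψ₁) with hX
  set Y := vecMulVec ψ₂ (star ψ₂) with hY
  set Z₁ := vecMulVec ψ₁ (star ψ₂) with hZ1
  set Z₂ := vecMulVec ψ₂ (star ψ₁) with hZ2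
  set M := (p₁ : ℂ) • X - (p₂ : ℂ) • Y with hM
  set l : ℝ := Real.sqrt ((p₁ + p₂)^2 - 4*p₁*p₂*c) with hl
  have h11 : star ψ₁ ⬝ᵥ ψ₁ = 1 := by
    have h := congrArg (fun r : ℝ => (r : ℂ)) hψ₁
    push_cast at h
    simp only [Complex.normSq_eq_conj_mul_self] at h
    simpa [dotProduct, Complex.star_def] using h
  have h22 : star ψ₂ ⬝ᵥ ψ₂ = 1 := by
    have h := congrArg (fun r : ℝ => (r : ℂ)) hψ₂
    push_cast at h
    simp only [Complex.normSq_eq_conj_mul_self] at h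
    simpa [dotProduct, Complex.star_def] using h
  have h21 : star ψ₂ ⬝ᵥ ψ₁ = (starRingEnd ℂ) t := by
    rw [ht]
    simp only [dotProduct, map_sum, Pi.star_apply, Complex.star_def]
    exact Finset.sum_congr rfl fun i _ => by
      rw [RingHom.map_mul, Complex.conj_conj]; ring
  have hγ : ((c : ℝ) : ℂ) = (starRingEnd ℂ) t * t := by
    rw [hc]; exact Complex.normSq_eq_conj_mul_self
  have hXX : X * X = X := by rw [hX, vmv_mul, h11, one_smul]
  have hXY : X * Y = t • Z₁ := by rw [hX, hY, hZ1, vmv_mul, ← ht]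
  have hYX : Y * X = (starRingEnd ℂ) t • Z₂ := by rw [hY, hX, hZ2, vmv_mul, h21]
  have hYY : Y * Y = Y := by rw [hY, vmv_mul, h22, one_smul]
  have hZ₁X : Z₁ * X = (starRingEnd ℂ) t • X := by rw [hZ1, hX, vmv_mul, h21]
  have hZ₁Y : Z₁ * Y = Z₁ := by rw [hZ1, hY, vmv_mul, h22, one_smul]
  have hZ₂X : Z₂ * X = Z₂ := by rw [hZ2, hX, vmv_mul, h11, one_smul]
  have hZ₂Y : Z₂ * Y = t • Y := by rw [hZ2, hY, vmv_mul, ← ht]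
  have hM2 : M * M = ((p₁:ℂ)*(p₁:ℂ)) • X - ((p₁:ℂ)*(p₂:ℂ)*t) • Z₁
      - ((p₁:ℂ)*(p₂:ℂ)*((starRingEnd ℂ) t)) • Z₂ + ((p₂:ℂ)*(p₂:ℂ)) • Y := by
    rw [hM]
    simp only [sub_mul, mul_sub, smul_mul_assoc, mul_smul_comm, hXX, hXY, hYX, hYY]
    module
  have hM3 : M * M * M = ((p₁:ℂ) - (p₂:ℂ)) • (M*M) - ((p₁:ℂ)*(p₂:ℂ)*(((c:ℝ):ℂ) - 1)) • M := by
    rw [hγ, hM2, hM]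
    simp only [sub_mul, add_mul, mul_sub, mul_add, smul_mul_assoc, mul_smul_comm,
      hXX, hXY, hYX, hYY, hZ₁X, hZ₁Y, hZ₂X, hZ₂Y]
    module
  have h4 : M*M*(M*M) = ((p₁:ℂ) - (p₂:ℂ)) • (M*M*M) - ((p₁:ℂ)*(p₂:ℂ)*(((c:ℝ):ℂ) - 1)) • (M*M) := by
    rw [← mul_assoc]
    conv_lhs => rw [hM3]
    simp only [sub_mul, smul_mul_assoc]
  have hc0 : 0 ≤ c := Complex.normSq_nonneg t
  have hc1 : c ≤ 1 := cs_le_one ψ₁ ψ₂ hψ₁ hψ₂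
  have hnn : 0 ≤ (p₁ + p₂)^2 - 4*p₁*p₂*c := by
    nlinarith [sq_nonneg (p₁ - p₂), mul_nonneg (mul_nonneg hp₁.le hp₂.le) (sub_nonneg.mpr hc1)]
  have hldef : l^2 = (p₁ + p₂)^2 - 4*p₁*p₂*c := by
    rw [hl]
    exact Real.sq_sqrt hnn
  have hl0 : 0 ≤ l := Real.sqrt_nonneg _
  rcases eq_or_lt_of_le hl0 with hl0' | hlpos
  · -- degenerate case
    have h0 : (p₁ + p₂)^2 - 4*p₁*p₂*c = 0 := by
      rw [← hldef, ← hl0']; ring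
    have hpp : p₁ = p₂ := by
      have hsq : (p₁ - p₂)^2 = 0 := by
        nlinarith [mul_nonneg (mul_nonneg hp₁.le hp₂.le) (sub_nonneg.mpr hc1),
          sq_nonneg (p₁ - p₂)]
      have h5 : p₁ - p₂ = 0 := by
        exact sq_eq_zero_iff.mp hsq
      linarith
    have hc1' : c = 1 := by
      have h2 : (1 - c) * (4 * p₂^2) = 0 := by
        rw [hpp] at h0; linear_combination h0
      rcases mul_eq_zero.mp h2 with h3 | h3
      · linarith
      · nlinarith
    have hn1 : ‖(WithLp.equiv 2 (Fin d → ℂ)).symm ψ₁‖ = 1 := by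
      rw [euclid_norm_sq, hψ₁, Real.sqrt_one]
    have hn2 : ‖(WithLp.equiv 2 (Fin d → ℂ)).symm ψ₂‖ = 1 := by
      rw [euclid_norm_sq, hψ₂, Real.sqrt_one]
    have hx0 : (WithLp.equiv 2 (Fin d → ℂ)).symm ψ₁ ≠ 0 := by
      intro h; rw [h, norm_zero] at hn1; norm_num at hn1
    have hy0 : (WithLp.equiv 2 (Fin d → ℂ)).symm ψ₂ ≠ 0 := by
      intro h; rw [h, norm_zero] at hn2; norm_num at hn2
    have hinner : ‖(inner ℂ ((WithLp.equiv 2 (Fin d → ℂ)).symm ψ₁)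
        ((WithLp.equiv 2 (Fin d → ℂ)).symm ψ₂) : ℂ)‖ =
        ‖(WithLp.equiv 2 (Fin d → ℂ)).symm ψ₁‖ * ‖(WithLp.equiv 2 (Fin d → ℂ)).symm ψ₂‖ := by
      rw [hn1, hn2, mul_one, inner_eq_dot, ← ht]
      have : ‖t‖^2 = 1 := by rw [show ‖t‖^2 = Complex.normSq t from by
        rw [← Complex.sq_norm], ← hc, hc1']
      nlinarith [norm_nonneg t]
    obtain ⟨r, hr0, hry⟩ := (norm_inner_eq_norm_iff hx0 hy0).mp hinner
    have hψ2r : ψ₂ = fun i => r * ψ₁ i := by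
      funext i
      simpa using congrArg (fun v : EuclideanSpace ℂ (Fin d) => v i) hry
    have hrr : r * (starRingEnd ℂ) r = 1 := by
      have hn : Complex.normSq r = 1 := by
        rw [hψ2r] at hψ₂
        simp only [Complex.normSq_mul] at hψ₂
        rw [← Finset.mul_sum, hψ₁, mul_one] at hψ₂
        exact hψ₂
      rw [Complex.mul_conj, hn, Complex.ofReal_one]
    have hYX' : Y = X := by
      rw [hY, hX, hψ2r]
      ext i j
      simp only [vecMulVec_apply, Pi.star_apply, star_mul', Complex.star_def]
      linear_combination (ψ₁ i * (starRingEnd ℂ) (ψ₁ j)) * hrr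
    have hM0 : M = 0 := by
      rw [hM, hYX', hpp, sub_self]
    rw [hM0, ← hl0']
    rw [traceNorm]
    have habs0 : matAbs (0 : Matrix (Fin d) (Fin d) ℂ) = 0 :=
      matAbs_eq_of_sq _ _ Matrix.PosSemidef.zero (by simp)
    rw [habs0]
    simp
  · -- main case : 0 < l
    set a : ℝ := (p₁ - p₂ + l)/2 with hadef
    set b : ℝ := (p₁ - p₂ - l)/2 with hbdef
    have hab_sum : a + b = p₁ - p₂ := by rw [hadef, hbdef]; ring
    have hab_mul : a * b = p₁*p₂*(c-1) := by
      rw [hadef, hbdef]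
      linear_combination (-1/4 : ℝ) * hldef
    have hla : a - b = l := by rw [hadef, hbdef]; ring
    have habs : |p₁ - p₂| ≤ l := by
      rw [hl, ← Real.sqrt_sq_eq_abs]
      apply Real.sqrt_le_sqrt
      nlinarith [mul_nonneg (mul_nonneg hp₁.le hp₂.le) (sub_nonneg.mpr hc1)]
    have ha0 : 0 ≤ a := by
      rw [hadef]
      have := neg_abs_le (p₁ - p₂)
      linarith
    have hb0 : b ≤ 0 := by
      rw [hbdef]
      have := le_abs_self (p₁ - p₂)
      linarith
    have hXh : Xᴴ = X := by
      rw [hX]; ext i j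
      simp [conjTranspose_apply, vecMulVec_apply, mul_comm]
    have hYh : Yᴴ = Y := by
      rw [hY]; ext i j
      simp [conjTranspose_apply, vecMulVec_apply, mul_comm]
    have hMh : Mᴴ = M := by
      rw [hM]
      rw [conjTranspose_sub, conjTranspose_smul, conjTranspose_smul, hXh, hYh]
      rw [Complex.star_def, Complex.conj_ofReal, Complex.conj_ofReal]
    have hMMh : (M*M)ᴴ = M*M := by rw [conjTranspose_mul, hMh]
    have hM3' : M*M*M = ((a+b : ℝ):ℂ) • (M*M) - ((a*b : ℝ):ℂ) • M := by
      rw [hM3, hab_sum, hab_mul]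
      push_cast
      module
    have h4' : M*M*(M*M) = ((a+b : ℝ):ℂ) • (M*M*M) - ((a*b : ℝ):ℂ) • (M*M) := by
      rw [h4, hab_sum, hab_mul]
      push_cast
      module
    have hM3'' : M*(M*M) = ((a+b : ℝ):ℂ) • (M*M) - ((a*b : ℝ):ℂ) • M := by
      rw [← mul_assoc]; exact hM3'
    set P := M*M - ((b : ℝ):ℂ) • M with hP
    set Q := M*M - ((a : ℝ):ℂ) • M with hQ
    have hPh : Pᴴ = P := by
      rw [hP, conjTranspose_sub, conjTranspose_smul, hMMh, hMh,
        Complex.star_def, Complex.conj_ofReal]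
    have hQh : Qᴴ = Q := by
      rw [hQ, conjTranspose_sub, conjTranspose_smul, hMMh, hMh,
        Complex.star_def, Complex.conj_ofReal]
    have hP2 : P*P = ((a*(a-b) : ℝ):ℂ) • P := by
      rw [hP]
      simp only [sub_mul, mul_sub, smul_mul_assoc, mul_smul_comm, smul_smul]
      rw [h4', hM3', hM3'']
      push_cast
      module
    have hQ2 : Q*Q = ((b*(b-a) : ℝ):ℂ) • Q := by
      rw [hQ]
      simp only [sub_mul, mul_sub, smul_mul_assoc, mul_smul_comm, smul_smul]
      rw [h4', hM3', hM3'']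
      push_cast
      module
    have hPpsd : P.PosSemidef := psd_of_sq hPh (by nlinarith) hP2
    have hQpsd : Q.PosSemidef := psd_of_sq hQh (by nlinarith) hQ2
    set N := ((l⁻¹ : ℝ):ℂ) • (P + Q) with hN
    have hNpsd : N.PosSemidef := by
      rw [hN]; exact psd_smul (hPpsd.add hQpsd) (by positivity)
    have hPQ : (P+Q)*(P+Q) = ((l^2 : ℝ):ℂ) • (M*M) := by
      rw [hP, hQ]
      simp only [add_mul, mul_add, sub_mul, mul_sub, smul_mul_assoc, mul_smul_comm, smul_smul]
      rw [h4', hM3', hM3'']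
      rw [show (l : ℝ)^2 = (a-b)^2 by rw [hla]]
      push_cast
      module
    have hln0 : (l : ℝ) ≠ 0 := ne_of_gt hlpos
    have hN2 : N^2 = Mᴴ * M := by
      have hone : ((l⁻¹:ℝ):ℂ) * ((l⁻¹:ℝ):ℂ) * ((l^2:ℝ):ℂ) = 1 := by
        push_cast
        field_simp
      rw [hMh, sq, hN, smul_mul_assoc, mul_smul_comm, hPQ, smul_smul, smul_smul, hone, one_smul]
    have hNeq : matAbs M = N := matAbs_eq_of_sq _ _ hNpsd hN2
    have htrX : X.trace = 1 := by
      rw [hX, trace_vmv, dotProduct_comm]; exact h11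
    have htrY : Y.trace = 1 := by
      rw [hY, trace_vmv, dotProduct_comm]; exact h22
    have htrZ₁ : Z₁.trace = (starRingEnd ℂ) t := by
      rw [hZ1, trace_vmv, dotProduct_comm]; exact h21
    have htrZ₂ : Z₂.trace = t := by
      rw [hZ2, trace_vmv, dotProduct_comm, ht]
    have htrM : M.trace = ((p₁ - p₂ : ℝ):ℂ) := by
      rw [hM, trace_sub, trace_smul, trace_smul, htrX, htrY]
      push_cast
      simp [smul_eq_mul]
    have htrM2 : (M*M).trace = ((p₁^2 + p₂^2 - 2*p₁*p₂*c : ℝ):ℂ) := by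
      rw [hM2, trace_add, trace_sub, trace_sub, trace_smul, trace_smul, trace_smul,
        trace_smul, htrX, htrY, htrZ₁, htrZ₂]
      push_cast [smul_eq_mul]
      rw [hγ]
      push_cast
      ring
    have hkey : l⁻¹ * (p₁^2 + p₂^2 - 2*p₁*p₂*c - b*(p₁-p₂)
        + (p₁^2 + p₂^2 - 2*p₁*p₂*c - a*(p₁-p₂))) = l := by
      rw [inv_mul_eq_iff_eq_mul₀ hln0]
      linear_combination (-1 : ℝ) * hldef - (p₁ - p₂) * hab_sum
    have htrN : N.trace = ((l : ℝ):ℂ) := by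
      rw [hN, trace_smul, trace_add, hP, hQ, trace_sub, trace_sub, trace_smul, trace_smul,
        htrM, htrM2]
      rw [smul_eq_mul, smul_eq_mul, smul_eq_mul]
      exact_mod_cast congrArg (fun r : ℝ => (r : ℂ)) hkey
    rw [traceNorm, hNeq, htrN, Complex.ofReal_re]

theorem pure_state_error_bounds {d : ℕ} (p₁ p₂ : ℝ) (hp₁ : 0 < p₁) (hp₂ : 0 < p₂)
    (ψ₁ ψ₂ : Fin d → ℂ)
    (hψ₁ : ∑ i, Complex.normSq (ψ₁ i) = 1) (hψ₂ : ∑ i, Complex.normSq (ψ₂ i) = 1) :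
    p₁ * p₂ / (p₁ + p₂) * Complex.normSq (∑ i, (starRingEnd ℂ) (ψ₁ i) * ψ₂ i) ≤
      (1/2) * ((((p₁ : ℂ) • vecMulVec ψ₁ (star ψ₁) +
          (p₂ : ℂ) • vecMulVec ψ₂ (star ψ₂)).trace).re) -
        (1/2) * traceNorm ((p₁ : ℂ) • vecMulVec ψ₁ (star ψ₁) -
          (p₂ : ℂ) • vecMulVec ψ₂ (star ψ₂)) ∧
    (1/2) * ((((p₁ : ℂ) • vecMulVec ψ₁ (star ψ₁) +
          (p₂ : ℂ) • vecMulVec ψ₂ (star ψ₂)).trace).re) -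
        (1/2) * traceNorm ((p₁ : ℂ) • vecMulVec ψ₁ (star ψ₁) -
          (p₂ : ℂ) • vecMulVec ψ₂ (star ψ₂)) ≤
      2 * p₁ * p₂ / (p₁ + p₂) * Complex.normSq (∑ i, (starRingEnd ℂ) (ψ₁ i) * ψ₂ i) := by
  have harg : (∑ i, (starRingEnd ℂ) (ψ₁ i) * ψ₂ i) = star ψ₁ ⬝ᵥ ψ₂ := by
    simp [dotProduct, Complex.star_def]
  rw [harg]
  have htn := key p₁ p₂ hp₁ hp₂ ψ₁ ψ₂ hψ₁ hψ₂
  set c : ℝ := Complex.normSq (star ψ₁ ⬝ᵥ ψ₂) with hc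
  set l : ℝ := Real.sqrt ((p₁ + p₂)^2 - 4*p₁*p₂*c) with hl
  have hc0 : 0 ≤ c := Complex.normSq_nonneg _
  have hc1 : c ≤ 1 := cs_le_one ψ₁ ψ₂ hψ₁ hψ₂
  have hnn : 0 ≤ (p₁ + p₂)^2 - 4*p₁*p₂*c := by
    nlinarith [sq_nonneg (p₁ - p₂), mul_nonneg (mul_nonneg hp₁.le hp₂.le) (sub_nonneg.mpr hc1)]
  have hldef : l^2 = (p₁ + p₂)^2 - 4*p₁*p₂*c := by
    rw [hl]; exact Real.sq_sqrt hnn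
  have hl0 : 0 ≤ l := Real.sqrt_nonneg _
  have hs : 0 < p₁ + p₂ := by linarith
  -- trace of the sum
  have htr1 : (vecMulVec ψ₁ (star ψ₁)).trace = 1 := by
    rw [trace_vmv, dotProduct_comm]
    have h := congrArg (fun r : ℝ => (r : ℂ)) hψ₁
    push_cast at h
    simp only [Complex.normSq_eq_conj_mul_self] at h
    simpa [dotProduct, Complex.star_def] using h
  have htr2 : (vecMulVec ψ₂ (star ψ₂)).trace = 1 := by
    rw [trace_vmv, dotProduct_comm]
    have h := congrArg (fun r : ℝ => (r : ℂ)) hψ₂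
    push_cast at h
    simp only [Complex.normSq_eq_conj_mul_self] at h
    simpa [dotProduct, Complex.star_def] using h
  have htrsum : (((p₁ : ℂ) • vecMulVec ψ₁ (star ψ₁) +
      (p₂ : ℂ) • vecMulVec ψ₂ (star ψ₂)).trace).re = p₁ + p₂ := by
    rw [trace_add, trace_smul, trace_smul, htr1, htr2, smul_eq_mul, smul_eq_mul,
      mul_one, mul_one, ← Complex.ofReal_add, Complex.ofReal_re]
  rw [htrsum, htn]
  -- scalar inequalities
  have h1 : (p₁ + p₂) * l ≤ (p₁ + p₂)^2 - 2*p₁*p₂*c := by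
    have hXv : 0 < (p₁ + p₂)^2 - 2*p₁*p₂*c := by
      nlinarith [mul_nonneg (mul_nonneg hp₁.le hp₂.le) (sub_nonneg.mpr hc1), sq_nonneg (p₁ - p₂)]
    nlinarith [hldef, mul_nonneg (mul_nonneg hp₁.le hp₂.le) hc0, sq_nonneg (p₁*p₂*c),
      mul_nonneg (mul_nonneg hs.le hl0) hXv.le, mul_nonneg hs.le hl0, sq_nonneg ((p₁+p₂)*l)]
  have hls : l ≤ p₁ + p₂ := by
    nlinarith [hldef, hl0, mul_nonneg (mul_nonneg hp₁.le hp₂.le) hc0]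
  have h2 : (p₁ + p₂)^2 - 4*p₁*p₂*c ≤ (p₁ + p₂) * l := by
    nlinarith [hldef, mul_nonneg hl0 (sub_nonneg.mpr hls)]
  constructor
  · rw [show p₁*p₂/(p₁+p₂)*c = p₁*p₂*c/(p₁+p₂) by ring, div_le_iff₀ hs]
    nlinarith [h1]
  · rw [show 2*p₁*p₂/(p₁+p₂)*c = 2*p₁*p₂*c/(p₁+p₂) by ring, le_div_iff₀ hs]
    nlinarith [h2]
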